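/- Let 0≤n≤N be integers. Then the q-Hahn polynomials satisfy the q-difference equations: (i) for N≥n+1, (R_{N−1}Q_n(·;α,β,N−1|q))(x)=(q^{−N+n}−1)·Q_n(x;α,β,N|q) for all 0≤x≤N; (ii) (L_{N+1}Q_n(·;α,β,N+1|q))(x)=q^{−n}(αβq^{N+n+2}−1)·Q_n(x;α,β,N|q) for all 0≤x≤N; (iii) (D_N Q_n(·;α,β,N|q))(x)=q^{−n}(1−q^n)(1−αβq^{n+1})·Q_n(x;α,β,N|q) for all 0≤x≤N. -/

import Mathlib

open Finset

noncomputable section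

/-- q-shifted factorial `(a;q)_m`. -/
def qPoch (q a : ℝ) (m : ℕ) : ℝ := ∏ k ∈ Finset.range m, (1 - a * q ^ k)

/-- Two-variable raising operator `R_M : V_{2,M} → V_{2,M+1}` (on functions of `x = x₁`). -/
def R2 (q : ℝ) (M : ℕ) (g : ℕ → ℂ) : ℕ → ℂ := fun x =>
  (q : ℂ) ^ (-(M : ℤ) - 1) * (1 - (q : ℂ) ^ x) * g (x - 1) +
    (q : ℂ) ^ ((x : ℤ) - M - 1) * (1 - (q : ℂ) ^ ((M : ℤ) + 1 - x)) * g x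

/-- `R2Iter q n k g = R_{n+k-1} ⋯ R_{n+1} R_n g`. -/
def R2Iter (q : ℝ) (n : ℕ) : ℕ → (ℕ → ℂ) → (ℕ → ℂ)
  | 0, g => g
  | k + 1, g => R2 q (n + k) (R2Iter q n k g)

/-- The function `φ_n(x) = q^{-n²/2}(q;q)_n (abq^{n+1})^x (b⁻¹q^{-n};q)_x / (aq;q)_x`. -/
def phiH (q a b : ℝ) (n : ℕ) : ℕ → ℂ := fun x =>
  ((q ^ (-((n : ℝ) ^ 2) / 2) * qPoch q q n * (a * b * q ^ (n + 1)) ^ x *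
      qPoch q (b⁻¹ * q ^ (-(n : ℤ))) x / qPoch q (a * q) x : ℝ) : ℂ)

/-- The one-dimensional q-Hahn polynomial `Q_n(x; a, b, N | q)`. -/
def qHahnQ (q a b : ℝ) (n N : ℕ) : ℕ → ℂ := fun x =>
  ((q : ℂ) ^ ((N - n) * (N - n + 1) / 2) / ((qPoch q q (N - n) : ℝ) : ℂ)) *
    R2Iter q n (N - n) (phiH q a b n) x

/-- Two-variable lowering operator `L_M : V_{2,M} → V_{2,M-1}` with parameters `(a,b)`. -/
def L2 (q a b : ℝ) (M : ℕ) (g : ℕ → ℂ) : ℕ → ℂ := fun x =>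
  ((a : ℂ) * (q : ℂ) ^ (x + 1) - 1) * g (x + 1) +
    (a : ℂ) * (q : ℂ) ^ (x + 1) * ((b : ℂ) * (q : ℂ) ^ ((M : ℤ) - x) - 1) * g x

/-- Two-variable q-Hahn operator `D_M : V_{2,M} → V_{2,M}` with parameters `(a,b)`. -/
def D2 (q a b : ℝ) (M : ℕ) (g : ℕ → ℂ) : ℕ → ℂ := fun x =>
  (1 - (a : ℂ) * (q : ℂ) ^ (x + 1)) * (1 - (q : ℂ) ^ ((x : ℤ) - M)) * g (x + 1) -
    ((1 - (a : ℂ) * (q : ℂ) ^ (x + 1)) * (1 - (q : ℂ) ^ ((x : ℤ) - M)) +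
      (q : ℂ) * (a : ℂ) * (1 - (q : ℂ) ^ x) * ((b : ℂ) - (q : ℂ) ^ ((x : ℤ) - M - 1))) * g x +
    (q : ℂ) * (a : ℂ) * (1 - (q : ℂ) ^ x) * ((b : ℂ) - (q : ℂ) ^ ((x : ℤ) - M - 1)) * g (x - 1)

set_option maxHeartbeats 1000000

/-- Cleared raising operator: `q^(M+1) * R2`. -/
def R2c (q : ℝ) (M : ℕ) (g : ℕ → ℂ) : ℕ → ℂ := fun x =>
  (1 - (q:ℂ)^x) * g (x-1) + ((q:ℂ)^x - (q:ℂ)^(M+1)) * g x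

/-- Cleared q-Hahn operator: `q^(M+1) * D2`. -/
def D2c (q a b : ℝ) (M : ℕ) (g : ℕ → ℂ) : ℕ → ℂ := fun x =>
  (1 - (a:ℂ)*(q:ℂ)^(x+1)) * ((q:ℂ)^(M+1) - (q:ℂ)^(x+1)) * g (x+1)
  - ((1 - (a:ℂ)*(q:ℂ)^(x+1)) * ((q:ℂ)^(M+1) - (q:ℂ)^(x+1))
      + (q:ℂ)*(a:ℂ)*(1-(q:ℂ)^x)*((b:ℂ)*(q:ℂ)^(M+1) - (q:ℂ)^x)) * g x
  + (q:ℂ)*(a:ℂ)*(1-(q:ℂ)^x)*((b:ℂ)*(q:ℂ)^(M+1) - (q:ℂ)^x) * g (x-1)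

/-- Cleared lowering operator: `q^x * L2`. -/
def L2c (q a b : ℝ) (M : ℕ) (g : ℕ → ℂ) : ℕ → ℂ := fun x =>
  ((a:ℂ)*(q:ℂ)^(x+1) - 1) * (q:ℂ)^x * g (x+1)
    + (a:ℂ)*(q:ℂ)^(x+1)*((b:ℂ)*(q:ℂ)^M - (q:ℂ)^x) * g x

lemma qPoch_succ (q c : ℝ) (m : ℕ) : qPoch q c (m+1) = qPoch q c m * (1 - c * q ^ m) :=
  Finset.prod_range_succ _ _

lemma R2_smul (q : ℝ) (M : ℕ) (c : ℂ) (g : ℕ → ℂ) (x : ℕ) :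
    R2 q M (fun y => c * g y) x = c * R2 q M g x := by
  unfold R2; ring

lemma D2_smul (q a b : ℝ) (M : ℕ) (c : ℂ) (g : ℕ → ℂ) (x : ℕ) :
    D2 q a b M (fun y => c * g y) x = c * D2 q a b M g x := by
  unfold D2; ring

lemma D2c_smul (q a b : ℝ) (M : ℕ) (c : ℂ) (g : ℕ → ℂ) (x : ℕ) :
    D2c q a b M (fun y => c * g y) x = c * D2c q a b M g x := by
  unfold D2c; ring

lemma L2c_smul (q a b : ℝ) (M : ℕ) (c : ℂ) (g : ℕ → ℂ) (x : ℕ) :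
    L2c q a b M (fun y => c * g y) x = c * L2c q a b M g x := by
  unfold L2c; ring

lemma R2c_smul (q : ℝ) (M : ℕ) (c : ℂ) (g : ℕ → ℂ) (x : ℕ) :
    R2c q M (fun y => c * g y) x = c * R2c q M g x := by
  unfold R2c; ring

lemma R2c_congr (q : ℝ) (M : ℕ) (g h : ℕ → ℂ) (x : ℕ) (H : ∀ y ≤ x, g y = h y) :
    R2c q M g x = R2c q M h x := by
  unfold R2c; rw [H (x-1) (by omega), H x le_rfl]

lemma R2_mul (q : ℝ) (hq : (q:ℂ) ≠ 0) (M : ℕ) (g : ℕ → ℂ) (x : ℕ) :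
    (q:ℂ)^(M+1) * R2 q M g x = R2c q M g x := by
  have E1 : (q:ℂ)^(M+1) * (q:ℂ)^(-(M:ℤ)-1) = 1 := by
    rw [← zpow_natCast (q:ℂ) (M+1), ← zpow_add₀ hq,
      show ((M+1:ℕ):ℤ) + (-(M:ℤ)-1) = 0 by push_cast; ring, zpow_zero]
  have E2 : (q:ℂ)^(M+1) * (q:ℂ)^((x:ℤ)-M-1) = (q:ℂ)^x := by
    rw [← zpow_natCast (q:ℂ) (M+1), ← zpow_natCast (q:ℂ) x, ← zpow_add₀ hq]
    congr 1; push_cast; ring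
  have E4 : (q:ℂ)^x * (q:ℂ)^((M:ℤ)+1-x) = (q:ℂ)^(M+1) := by
    rw [← zpow_natCast (q:ℂ) (M+1), ← zpow_natCast (q:ℂ) x, ← zpow_add₀ hq]
    congr 1; push_cast; ring
  unfold R2 R2c
  linear_combination (g (x-1) * (1 - (q:ℂ)^x)) * E1
    + (g x * (1 - (q:ℂ)^((M:ℤ)+1-x))) * E2 - (g x) * E4

lemma D2_mul (q a b : ℝ) (hq : (q:ℂ) ≠ 0) (M : ℕ) (g : ℕ → ℂ) (x : ℕ) :
    (q:ℂ)^(M+1) * D2 q a b M g x = D2c q a b M g x := by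
  have F1 : (q:ℂ)^(M+1) * (q:ℂ)^((x:ℤ)-M) = (q:ℂ)^(x+1) := by
    rw [← zpow_natCast (q:ℂ) (M+1), ← zpow_natCast (q:ℂ) (x+1), ← zpow_add₀ hq]
    congr 1; push_cast; ring
  have F2 : (q:ℂ)^(M+1) * (q:ℂ)^((x:ℤ)-M-1) = (q:ℂ)^x := by
    rw [← zpow_natCast (q:ℂ) (M+1), ← zpow_natCast (q:ℂ) x, ← zpow_add₀ hq]
    congr 1; push_cast; ring
  unfold D2 D2c
  linear_combination (-(1-(a:ℂ)*(q:ℂ)^(x+1))*(g (x+1) - g x)) * F1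
    + (-((q:ℂ)*(a:ℂ)*(1-(q:ℂ)^x))*(g (x-1) - g x)) * F2

lemma L2_mul (q a b : ℝ) (hq : (q:ℂ) ≠ 0) (M : ℕ) (g : ℕ → ℂ) (x : ℕ) :
    (q:ℂ)^x * L2 q a b M g x = L2c q a b M g x := by
  have G1 : (q:ℂ)^x * (q:ℂ)^((M:ℤ)-x) = (q:ℂ)^M := by
    rw [← zpow_natCast (q:ℂ) M, ← zpow_natCast (q:ℂ) x, ← zpow_add₀ hq]
    congr 1; push_cast; ring
  unfold L2 L2c
  linear_combination ((a:ℂ)*(q:ℂ)^(x+1)*(b:ℂ)*g x) * G1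

lemma DRc (q a b : ℝ) (M : ℕ) (g : ℕ → ℂ) (x : ℕ) :
    D2c q a b (M+1) (R2c q M g) x = (q:ℂ) * R2c q M (D2c q a b M g) x := by
  match x with
  | 0 => unfold D2c R2c; simp only [Nat.zero_sub, Nat.add_sub_cancel]; ring
  | y+1 => unfold D2c R2c; simp only [Nat.add_sub_cancel]; ring

lemma LRc (q a b : ℝ) (M : ℕ) (g : ℕ → ℂ) (x : ℕ) :
    L2c q a b (M+1) (R2c q M g) x =
      (q:ℂ)^x * (D2c q a b M g x
        + ((q:ℂ)^(M+1) - 1 + (a:ℂ)*(b:ℂ)*(q:ℂ)^(M+2) - (a:ℂ)*(b:ℂ)*(q:ℂ)^(2*M+3)) * g x) := by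
  match x with
  | 0 => unfold L2c R2c D2c; simp only [Nat.zero_sub, Nat.add_sub_cancel]; ring
  | y+1 => unfold L2c R2c D2c; simp only [Nat.add_sub_cancel]; ring

lemma phi_step_r (q a b : ℝ) (hq : q ≠ 0) (hb : b ≠ 0) (n x : ℕ)
    (hx : 1 - a * q ^ (x+1) ≠ 0) :
    q ^ (-((n : ℝ) ^ 2) / 2) * qPoch q q n * (a * b * q ^ (n + 1)) ^ (x+1) *
        qPoch q (b⁻¹ * q ^ (-(n : ℤ))) (x+1) / qPoch q (a * q) (x+1) * (1 - a * q ^ (x+1))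
        * q ^ n
      = q ^ (-((n : ℝ) ^ 2) / 2) * qPoch q q n * (a * b * q ^ (n + 1)) ^ x *
          qPoch q (b⁻¹ * q ^ (-(n : ℤ))) x / qPoch q (a * q) x * (a * q ^ (n+1))
          * (b * q ^ n - q ^ x) := by
  have h1 : (q:ℝ)^(n:ℤ) * q^(-(n:ℤ)) = 1 := by
    rw [← zpow_add₀ hq, show (n:ℤ) + (-(n:ℤ)) = 0 by ring, zpow_zero]
  have h2 : b⁻¹ * b = 1 := inv_mul_cancel₀ hb
  have H : (q:ℝ)^n * (b⁻¹ * q ^ (-(n:ℤ))) * b = 1 := by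
    rw [← zpow_natCast q n]
    linear_combination (b⁻¹*b) * h1 + h2
  rw [qPoch_succ q (b⁻¹ * q ^ (-(n:ℤ))) x, qPoch_succ q (a*q) x,
    show (1 - a * q * q ^ x : ℝ) = 1 - a * q^(x+1) by ring]
  rw [div_mul_eq_mul_div, mul_div_mul_right _ _ hx]
  rw [div_mul_eq_mul_div, div_mul_eq_mul_div, div_mul_eq_mul_div]
  congr 1
  linear_combination (-(q ^ (-((n : ℝ) ^ 2) / 2) * qPoch q q n * (a * b * q ^ (n + 1)) ^ x *
      qPoch q (b⁻¹ * q ^ (-(n : ℤ))) x * a * q^(n+1) * q^x)) * H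

lemma phi_step (q a b : ℝ) (hq : q ≠ 0) (hb : b ≠ 0) (n x : ℕ)
    (hx : 1 - a * q ^ (x+1) ≠ 0) :
    phiH q a b n (x+1) * (1 - (a:ℂ) * (q:ℂ)^(x+1)) * (q:ℂ)^n
      = phiH q a b n x * ((a:ℂ) * (q:ℂ)^(n+1)) * ((b:ℂ) * (q:ℂ)^n - (q:ℂ)^x) := by
  have h := phi_step_r q a b hq hb n x hx
  unfold phiH
  exact_mod_cast congrArg (fun r : ℝ => (r : ℂ)) h

lemma D2c_phi (q a b : ℝ) (hq : q ≠ 0) (hb : b ≠ 0) (n x : ℕ)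
    (h1 : 1 - a * q ^ (x+1) ≠ 0) (h0 : x = 0 ∨ 1 - a * q ^ x ≠ 0) :
    D2c q a b n (phiH q a b n) x
      = (q:ℂ) * (1 - (q:ℂ)^n) * (1 - (a:ℂ)*(b:ℂ)*(q:ℂ)^(n+1)) * phiH q a b n x := by
  have hqc : (q:ℂ) ≠ 0 := by exact_mod_cast hq
  match x, h0 with
  | 0, _ =>
    have e := phi_step q a b hq hb n 0 h1
    apply mul_left_cancel₀ (pow_ne_zero n hqc)
    unfold D2c
    simp only [Nat.zero_sub]
    linear_combination ((q:ℂ)^(n+1) - (q:ℂ)) * e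
  | y+1, h0 =>
    have h0' : 1 - a * q ^ (y+1) ≠ 0 := by
      rcases h0 with h | h
      · exact absurd h (by omega)
      · exact h
    have e1 := phi_step q a b hq hb n (y+1) h1
    have e0 := phi_step q a b hq hb n y h0'
    have h0c : (1:ℂ) - (a:ℂ) * (q:ℂ)^(y+1) ≠ 0 := by
      have := Complex.ofReal_ne_zero.mpr h0'
      push_cast at this
      exact this
    apply mul_left_cancel₀
      (show (q:ℂ)^n * (q:ℂ)^n * ((1:ℂ) - (a:ℂ)*(q:ℂ)^(y+1)) ≠ 0 from
        mul_ne_zero (mul_ne_zero (pow_ne_zero n hqc) (pow_ne_zero n hqc)) h0c)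
    unfold D2c
    simp only [Nat.add_sub_cancel]
    linear_combination
      ((q:ℂ)^n * (1 - (a:ℂ)*(q:ℂ)^(y+1)) * ((q:ℂ)^(n+1) - (q:ℂ)^(y+2))) * e1
      + (((q:ℂ)^(n+1) - (q:ℂ)^(y+2)) * (a:ℂ) * (q:ℂ)^(n+1) * ((b:ℂ)*(q:ℂ)^n - (q:ℂ)^(y+1))
          - (q:ℂ)^n * ((1 - (a:ℂ)*(q:ℂ)^(y+2)) * ((q:ℂ)^(n+1) - (q:ℂ)^(y+2))
            + (q:ℂ)*(a:ℂ)*(1 - (q:ℂ)^(y+1)) * ((b:ℂ)*(q:ℂ)^(n+1) - (q:ℂ)^(y+1))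
            + (q:ℂ)*(1 - (q:ℂ)^n)*(1 - (a:ℂ)*(b:ℂ)*(q:ℂ)^(n+1)))) * e0

lemma eig (q a b : ℝ) (hq : q ≠ 0) (hb : b ≠ 0) (N n : ℕ)
    (hA : ∀ j, j ≤ N → (1:ℝ) - a * q ^ (j+1) ≠ 0) :
    ∀ k, ∀ x ≤ N, D2c q a b (n+k) (R2Iter q n k (phiH q a b n)) x
      = (q:ℂ)^(n+k+1) * ((q:ℂ)^(-(n:ℤ)) * (1 - (q:ℂ)^n) * (1 - (a:ℂ)*(b:ℂ)*(q:ℂ)^(n+1)))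
          * R2Iter q n k (phiH q a b n) x := by
  have hqc : (q:ℂ) ≠ 0 := by exact_mod_cast hq
  have hlam : (q:ℂ)^(n+1) * (q:ℂ)^(-(n:ℤ)) = (q:ℂ) := by
    rw [← zpow_natCast (q:ℂ) (n+1), ← zpow_add₀ hqc,
      show ((n+1:ℕ):ℤ) + (-(n:ℤ)) = 1 by push_cast; ring, zpow_one]
  intro k
  induction k with
  | zero =>
    intro x hx
    show D2c q a b (n+0) (phiH q a b n) x = _
    rw [Nat.add_zero]
    have h0 : x = 0 ∨ 1 - a * q ^ x ≠ 0 := by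
      match x with
      | 0 => exact Or.inl rfl
      | y+1 => exact Or.inr (hA y (by omega))
    rw [D2c_phi q a b hq hb n x (hA x hx) h0]
    show _ = (q:ℂ)^(n+0+1) * _ * phiH q a b n x
    linear_combination (-(1 - (q:ℂ)^n) * (1 - (a:ℂ)*(b:ℂ)*(q:ℂ)^(n+1))
      * phiH q a b n x) * hlam
  | succ k ih =>
    intro x hx
    have hinv : R2Iter q n (k+1) (phiH q a b n)
        = fun y => ((q:ℂ)^(n+k+1))⁻¹ * R2c q (n+k) (R2Iter q n k (phiH q a b n)) y := by
      funext y
      rw [← R2_mul q hqc (n+k) _ y, inv_mul_cancel_left₀ (pow_ne_zero _ hqc)]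
      rfl
    show D2c q a b (n+k+1) (R2Iter q n (k+1) (phiH q a b n)) x = _
    rw [hinv, D2c_smul, DRc,
      R2c_congr q (n+k) _ (fun y => (q:ℂ)^(n+k+1)
          * ((q:ℂ)^(-(n:ℤ)) * (1 - (q:ℂ)^n) * (1 - (a:ℂ)*(b:ℂ)*(q:ℂ)^(n+1)))
          * R2Iter q n k (phiH q a b n) y) x
        (fun y hy => ih y (le_trans hy hx)),
      R2c_smul]
    ring

theorem stmt9 (q : ℝ) (hq0 : 0 < q) (hq1 : q < 1) (a b : ℝ) (ha : 0 < a) (hb : 0 < b)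
    (n N : ℕ) (hnN : n ≤ N)
    (hparam : (a < q⁻¹ ∧ b < q⁻¹) ∨
      ((q : ℝ) ^ (-(N : ℤ) - 1) < a ∧ (q : ℝ) ^ (-(N : ℤ) - 1) < b)) :
    (n + 1 ≤ N → ∀ x ≤ N,
      R2 q (N - 1) (qHahnQ q a b n (N - 1)) x =
        ((q : ℂ) ^ ((n : ℤ) - N) - 1) * qHahnQ q a b n N x) ∧
    (∀ x ≤ N,
      L2 q a b (N + 1) (qHahnQ q a b n (N + 1)) x =
        (q : ℂ) ^ (-(n : ℤ)) * ((a : ℂ) * (b : ℂ) * (q : ℂ) ^ (N + n + 2) - 1) *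
          qHahnQ q a b n N x) ∧
    (∀ x ≤ N,
      D2 q a b N (qHahnQ q a b n N) x =
        (q : ℂ) ^ (-(n : ℤ)) * (1 - (q : ℂ) ^ n) *
          (1 - (a : ℂ) * (b : ℂ) * (q : ℂ) ^ (n + 1)) * qHahnQ q a b n N x) := by
  obtain ⟨m, rfl⟩ : ∃ m, N = n + m := ⟨N - n, by omega⟩
  have hq : q ≠ 0 := ne_of_gt hq0
  have hqc : (q:ℂ) ≠ 0 := by exact_mod_cast hq
  have hbne : b ≠ 0 := ne_of_gt hb
  have hA : ∀ j, j ≤ n + m → (1:ℝ) - a * q ^ (j+1) ≠ 0 := by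
    intro j hj
    rcases hparam with ⟨ha1, _⟩ | ⟨ha1, _⟩
    · have hq1' : q ^ j ≤ 1 := pow_le_one₀ hq0.le hq1.le
      have haq : a * q < 1 := by
        have h := mul_lt_mul_of_pos_right ha1 hq0
        rwa [inv_mul_cancel₀ hq] at h
      have hlt : a * q ^ (j+1) < 1 := by
        have hpos : (0:ℝ) < q ^ j := pow_pos hq0 j
        nlinarith [pow_succ q j, mul_pos ha hpos]
      exact ne_of_gt (by linarith)
    · have hzp : (q:ℝ) ^ (-((n+m:ℕ):ℤ) - 1) = (q ^ (n+m+1))⁻¹ := by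
        rw [show -((n+m:ℕ):ℤ) - 1 = -(((n+m+1:ℕ)):ℤ) by push_cast; ring, zpow_neg,
          zpow_natCast]
      rw [hzp] at ha1
      have hp1 : (0:ℝ) < q ^ (n+m+1) := pow_pos hq0 _
      have hgt : 1 < a * q ^ (n+m+1) := by
        have h := mul_lt_mul_of_pos_right ha1 hp1
        rwa [inv_mul_cancel₀ (ne_of_gt hp1)] at h
      have mono : q ^ (n+m+1) ≤ q ^ (j+1) :=
        pow_le_pow_of_le_one hq0.le hq1.le (by omega)
      have : 1 < a * q ^ (j+1) :=
        lt_of_lt_of_le hgt (mul_le_mul_of_nonneg_left mono ha.le)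
      exact ne_of_lt (by linarith)
  have eigen := eig q a b hq hbne (n+m) n hA
  have hPoch : ∀ k : ℕ, (0:ℝ) < qPoch q q k := by
    intro k
    apply Finset.prod_pos
    intro i _
    have h1 : q * q ^ i < 1 := by
      have := pow_lt_one₀ hq0.le hq1 (Nat.succ_ne_zero i)
      calc q * q ^ i = q ^ (i+1) := by ring
        _ < 1 := this
    linarith
  have hPC : ∀ k : ℕ, ((qPoch q q k : ℝ) : ℂ) ≠ 0 :=
    fun k => Complex.ofReal_ne_zero.mpr (ne_of_gt (hPoch k))
  have hPsucc : ∀ k : ℕ, ((qPoch q q (k+1) : ℝ) : ℂ)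
      = ((qPoch q q k : ℝ) : ℂ) * (1 - (q:ℂ) * (q:ℂ)^k) := by
    intro k; rw [qPoch_succ]; push_cast; ring
  have h1q : ∀ k : ℕ, (1:ℂ) - (q:ℂ) * (q:ℂ)^k ≠ 0 := by
    intro k
    have h1 : q * q ^ k < 1 := by
      have := pow_lt_one₀ hq0.le hq1 (Nat.succ_ne_zero k)
      calc q * q ^ k = q ^ (k+1) := by ring
        _ < 1 := this
    have : ((1 - q * q ^ k : ℝ) : ℂ) ≠ 0 := Complex.ofReal_ne_zero.mpr (ne_of_gt (by linarith))
    push_cast at this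
    exact this
  have hzn : (q:ℂ)^(-(n:ℤ)) = ((q:ℂ)^n)⁻¹ := by rw [zpow_neg, zpow_natCast]
  have hsplit : ∀ k : ℕ, (k+1) * (k+1+1) / 2 = k * (k+1) / 2 + (k+1) := by
    intro k
    rw [show (k+1)*(k+1+1) = k*(k+1) + 2*(k+1) from by ring,
      Nat.add_mul_div_left _ _ (by norm_num : 0 < 2)]
  refine ⟨?_, ?_, ?_⟩
  · -- (i)
    intro hge x hx
    obtain ⟨m', rfl⟩ : ∃ m', m = m' + 1 := ⟨m - 1, by omega⟩
    rw [show n + (m'+1) - 1 = n + m' from by omega]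
    unfold qHahnQ
    simp only [show n + m' - n = m' from by omega, show n + (m'+1) - n = m'+1 from by omega]
    rw [R2_smul]
    rw [show R2Iter q n (m'+1) (phiH q a b n) x
        = R2 q (n+m') (R2Iter q n m' (phiH q a b n)) x from rfl]
    have hzc : (q:ℂ)^((n:ℤ) - ((n+(m'+1):ℕ):ℤ)) = ((q:ℂ)^(m'+1))⁻¹ := by
      rw [show (n:ℤ) - ((n+(m'+1):ℕ):ℤ) = -((m'+1:ℕ):ℤ) by push_cast; ring, zpow_neg,
        zpow_natCast]
    rw [hzc, hsplit m', pow_add, hPsucc m']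
    field_simp [hqc, hPC m', h1q m']
    linear_combination (-((q:ℂ) * (q:ℂ)^m' * (q:ℂ)^(m' * (m'+1)/2) * R2 q (n+m') (R2Iter q n m' (phiH q a b n)) x)) * mul_inv_cancel₀ (h1q m')
  · -- (ii)
    intro x hx
    apply mul_left_cancel₀ (pow_ne_zero x hqc)
    rw [L2_mul q a b hqc (n+m+1) _ x]
    unfold qHahnQ
    simp only [show n + m + 1 - n = m + 1 from by omega, show n + m - n = m from by omega]
    rw [L2c_smul]
    rw [show R2Iter q n (m+1) (phiH q a b n)
        = R2 q (n+m) (R2Iter q n m (phiH q a b n)) from rfl]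
    have hfun : R2 q (n+m) (R2Iter q n m (phiH q a b n))
        = fun y => ((q:ℂ)^(n+m+1))⁻¹ * R2c q (n+m) (R2Iter q n m (phiH q a b n)) y := by
      funext y
      rw [← R2_mul q hqc (n+m) _ y, inv_mul_cancel_left₀ (pow_ne_zero _ hqc)]
    rw [hfun, L2c_smul, LRc q a b (n+m) _ x, eigen m x hx]
    rw [hsplit m, pow_add, hPsucc m, hzn]
    field_simp [hqc, hPC m, h1q m]
    ring
  · -- (iii)
    intro x hx
    apply mul_left_cancel₀ (pow_ne_zero (n+m+1) hqc)
    rw [D2_mul q a b hqc (n+m) _ x]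
    unfold qHahnQ
    simp only [show n + m - n = m from by omega]
    rw [D2c_smul, eigen m x hx]
    ring
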